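/- For p ∈ (1,2), x > 0, and y > 0, the matrix (p(p-1)x^{p-4}/(4y)) · [[2(p-2)(p-3)y², 2(p-2)xy], [2(p-2)xy, x²]] is positive semi-definite. -/

import Mathlib

theorem stmt_7 (p x y : ℝ) (hp : p ∈ Set.Ioo (1 : ℝ) 2) (hx : 0 < x) (hy : 0 < y) :
    Matrix.PosSemidef
      ((p * (p - 1) * x ^ (p - 4) / (4 * y)) •
        !![2 * (p - 2) * (p - 3) * y ^ 2, 2 * (p - 2) * x * y;
           2 * (p - 2) * x * y, x ^ 2]) := by
  obtain ⟨hp1, hp2⟩ := hp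
  have hxp : 0 < x ^ (p - 4) := Real.rpow_pos_of_pos hx _
  have hc : 0 ≤ p * (p - 1) * x ^ (p - 4) / (4 * y) := by
    apply div_nonneg
    · apply mul_nonneg _ hxp.le
      nlinarith
    · linarith
  rw [Matrix.posSemidef_iff_dotProduct_mulVec]
  constructor
  · ext i j
    fin_cases i <;> fin_cases j <;>
      simp [Matrix.conjTranspose_apply, Matrix.smul_apply]
  · intro v
    have h0 := sq_nonneg (2 * (p - 2) * (p - 3) * y ^ 2 * v 0 + 2 * (p - 2) * x * y * v 1)
    have ha : 0 < 2 * (p - 2) * (p - 3) * y ^ 2 := by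
      have := mul_pos (mul_pos (by linarith : (0:ℝ) < 2 - p) (by linarith : (0:ℝ) < 3 - p)) (pow_pos hy 2)
      nlinarith [this]
    have hdet : 0 ≤ (2 * (2 - p) * (p - 1) * x ^ 2 * y ^ 2) * v 1 ^ 2 := by
      have h1 : 0 < 2 * (2 - p) * (p - 1) * x ^ 2 * y ^ 2 := by
        have := mul_pos (mul_pos (mul_pos (mul_pos (by norm_num : (0:ℝ) < 2) (by linarith : (0:ℝ) < 2 - p)) (by linarith : (0:ℝ) < p - 1)) (pow_pos hx 2)) (pow_pos hy 2)
        linarith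
      exact mul_nonneg h1.le (sq_nonneg _)
    simp only [Matrix.smul_mulVec, Matrix.mulVec, dotProduct,
      Fin.sum_univ_two, Matrix.smul_apply, Matrix.cons_val', Matrix.cons_val_zero,
      Matrix.cons_val_one, Matrix.head_cons, Matrix.empty_val', Matrix.of_apply,
      Matrix.cons_val_fin_one, smul_eq_mul, Pi.smul_apply, RCLike.star_def,
      starRingEnd_apply, star_trivial, Matrix.vecHead, Matrix.vecTail]
    have key : 0 ≤ v 0 * (2 * (p - 2) * (p - 3) * y ^ 2 * v 0 + 2 * (p - 2) * x * y * v 1)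
        + v 1 * (2 * (p - 2) * x * y * v 0 + x ^ 2 * v 1) := by
      nlinarith [h0, hdet, ha, mul_pos ha ha]
    nlinarith [mul_nonneg hc key]
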